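/- arXiv:1304.4290 — 2 statements merged into one kernel-verified Lean document; each statement's English description precedes it below -/
import Mathlib

section
/- A numerical semigroup S has α-rectangular Apéry set if and only if the poset (Ap(S,m), ⪯) has a unique maximal element and that element has a unique representation as a nonnegative integer combination of the minimal generators. -/
/-- A numerical semigroup: a subset of ℕ containing 0, closed under addition,
with finite complement. -/
structure NumSgp where
  carrier : Set ℕ
  zero_mem : 0 ∈ carrier
  add_mem : ∀ a ∈ carrier, ∀ b ∈ carrier, a + b ∈ carrier
  cofinite : Set.Finite carrierᶜ

namespace NumSgp

/-- The multiplicity: the smallest positive element. -/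
noncomputable def mult (S : NumSgp) : ℕ := sInf {s | s ∈ S.carrier ∧ s ≠ 0}

/-- The Apéry set of `S` with respect to `n`: elements `s ∈ S` with `s - n ∉ S`. -/
def Apery (S : NumSgp) (n : ℕ) : Set ℕ :=
  {s | s ∈ S.carrier ∧ ¬ ∃ t ∈ S.carrier, s = t + n}

/-- `s ⪯ t` : there is `u ∈ S` with `t = s + u`. -/
def sle (S : NumSgp) (s t : ℕ) : Prop := ∃ u ∈ S.carrier, t = s + u

/-- Membership for integers. -/
def memZ (S : NumSgp) (x : ℤ) : Prop := ∃ n ∈ S.carrier, (n : ℤ) = x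

/-- `f` is the Frobenius number of `S`: the largest integer not in `S`. -/
def IsFrob (S : NumSgp) (f : ℤ) : Prop := ¬ S.memZ f ∧ ∀ x : ℤ, f < x → S.memZ x

/-- `S` is symmetric: `x ∈ S ↔ f - x ∉ S` for all integers `x`. -/
def Symm (S : NumSgp) : Prop :=
  ∃ f : ℤ, S.IsFrob f ∧ ∀ x : ℤ, S.memZ x ↔ ¬ S.memZ (f - x)

/-- `s` is a minimal generator (irreducible element) of `S`. -/
def IsMinGen (S : NumSgp) (s : ℕ) : Prop :=
  s ∈ S.carrier ∧ s ≠ 0 ∧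
    ¬ ∃ a ∈ S.carrier, ∃ b ∈ S.carrier, a ≠ 0 ∧ b ≠ 0 ∧ s = a + b

/-- `g : Fin ν → ℕ` enumerates the minimal generators in increasing order. -/
def MinGens (S : NumSgp) {ν : ℕ} (g : Fin ν → ℕ) : Prop :=
  StrictMono g ∧ Set.range g = {s | S.IsMinGen s}

/-- The order of `s`: the maximal total coefficient sum over representations of `s`
in terms of the generators `g`. -/
noncomputable def ord {ν : ℕ} (g : Fin ν → ℕ) (s : ℕ) : ℕ :=
  sSup {k | ∃ lam : Fin ν → ℕ, s = ∑ i, lam i * g i ∧ k = ∑ i, lam i}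

/-- `s` has a unique representation in terms of the generators `g`. -/
def UniqueRep {ν : ℕ} (g : Fin ν → ℕ) (s : ℕ) : Prop :=
  ∃! lam : Fin ν → ℕ, s = ∑ i, lam i * g i

/-- `s` has a unique maximal representation in terms of the generators `g`. -/
def UniqueMaxRep {ν : ℕ} (g : Fin ν → ℕ) (s : ℕ) : Prop :=
  ∃! lam : Fin ν → ℕ, s = ∑ i, lam i * g i ∧ ∑ i, lam i = ord g s

/-- The submonoid of ℕ generated by the generators `g j` with `j < i`. -/
def genBy {ν : ℕ} (g : Fin ν → ℕ) (i : Fin ν) : Set ℕ :=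
  {s | ∃ lam : Fin ν → ℕ, (∀ j, ¬ j < i → lam j = 0) ∧ s = ∑ j, lam j * g j}

/-- `τ_i = min {h | h·g_i ∈ ⟨g_1, …, g_{i-1}⟩} - 1`. -/
noncomputable def tau {ν : ℕ} (g : Fin ν → ℕ) (i : Fin ν) : ℕ :=
  sInf {h | h * g i ∈ genBy g i} - 1

/-- `α_i = max {h | h·g_i ∈ Ap(S, m)}`. -/
noncomputable def alpha (S : NumSgp) {ν : ℕ} (g : Fin ν → ℕ) (i : Fin ν) : ℕ :=
  sSup {h | h * g i ∈ S.Apery S.mult}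

/-- `β_i = max {h | h·g_i ∈ Ap(S, m) and ord(h·g_i) = h}`. -/
noncomputable def beta (S : NumSgp) {ν : ℕ} (g : Fin ν → ℕ) (i : Fin ν) : ℕ :=
  sSup {h | h * g i ∈ S.Apery S.mult ∧ ord g (h * g i) = h}

/-- `γ_i`. -/
noncomputable def gamma (S : NumSgp) {ν : ℕ} (g : Fin ν → ℕ) (i : Fin ν) : ℕ :=
  sSup {h | h * g i ∈ S.Apery S.mult ∧ ord g (h * g i) = h ∧ UniqueMaxRep g (h * g i)}

/-- The "rectangle" `{Σ_{i ≥ 2} λ_i g_i | 0 ≤ λ_i ≤ c_i}` (indices here start at 0,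
the first generator does not appear). -/
def rect {ν : ℕ} (g c : Fin ν → ℕ) : Set ℕ :=
  {s | ∃ lam : Fin ν → ℕ, (∀ i, i.val = 0 → lam i = 0) ∧ (∀ i, lam i ≤ c i) ∧
    s = ∑ i, lam i * g i}

/-- `Π_{i ≥ 2} (c_i + 1)` (the first index excluded). -/
def piProd {ν : ℕ} (c : Fin ν → ℕ) : ℕ :=
  ∏ i ∈ Finset.univ.filter (fun i : Fin ν => i.val ≠ 0), (c i + 1)

/-- `S` is telescopic. -/
def Telescopic (S : NumSgp) : Prop :=
  ∃ (ν : ℕ) (g : Fin ν → ℕ), S.MinGens g ∧ S.Apery S.mult = rect g (tau g)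

/-- `S` has α-rectangular Apéry set. -/
def AlphaRect (S : NumSgp) : Prop :=
  ∃ (ν : ℕ) (g : Fin ν → ℕ), S.MinGens g ∧ S.Apery S.mult = rect g (S.alpha g)

/-- `S` has γ-rectangular Apéry set. -/
def GammaRect (S : NumSgp) : Prop :=
  ∃ (ν : ℕ) (g : Fin ν → ℕ), S.MinGens g ∧ S.Apery S.mult = rect g (S.gamma g)

/-- `S` is associated to a plane branch: telescopic and `(τ_i+1) g_i < g_{i+1}`. -/
def PlaneBranch (S : NumSgp) : Prop :=
  ∃ (ν : ℕ) (g : Fin ν → ℕ), S.MinGens g ∧ S.Apery S.mult = rect g (tau g) ∧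
    ∀ i : Fin ν, 1 ≤ i.val → ∀ h : i.val + 1 < ν, (tau g i + 1) * g i < g ⟨i.val + 1, h⟩

/-- `S` is free: for some rearrangement `n` of the minimal generators,
`Ap(S, n_1) = {Σ_{i ≥ 2} λ_i n_i | 0 ≤ λ_i ≤ φ_i}`. -/
def Free (S : NumSgp) : Prop :=
  ∃ (ν : ℕ) (hν : 0 < ν) (n : Fin ν → ℕ), Function.Injective n ∧
    Set.range n = {s | S.IsMinGen s} ∧ S.Apery (n ⟨0, hν⟩) = rect n (tau n)

/-- The kernel congruence of the factorization map `λ ↦ Σ λ_i g_i`. -/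
def kerCon {ν : ℕ} (g : Fin ν → ℕ) : AddCon (Fin ν → ℕ) where
  r a b := ∑ i, a i * g i = ∑ i, b i * g i
  iseqv := ⟨fun _ => rfl, Eq.symm, Eq.trans⟩
  add' := by
    intro a b c d h1 h2
    simp only [Pi.add_apply, add_mul, Finset.sum_add_distrib]
    exact congrArg₂ (· + ·) h1 h2

/-- `S` is a complete intersection: it admits a presentation of cardinality `ν - 1`
(the cardinality of any minimal presentation equals `ν - 1`). -/
def CompleteIntersection (S : NumSgp) : Prop :=
  ∃ (ν : ℕ) (g : Fin ν → ℕ), S.MinGens g ∧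
    ∃ ρ : Finset ((Fin ν → ℕ) × (Fin ν → ℕ)), ρ.card = ν - 1 ∧
      addConGen (fun a b => (a, b) ∈ ρ) = kerCon g

end NumSgp
section Aux

namespace NumSgp

lemma aux_nsmul_mem (S : NumSgp) (n s : ℕ) (hs : s ∈ S.carrier) : n * s ∈ S.carrier := by
  induction n with
  | zero => simpa using S.zero_mem
  | succ n ih => rw [Nat.succ_mul]; exact S.add_mem _ ih _ hs

lemma aux_comb_mem (S : NumSgp) {ν : ℕ} {g : Fin ν → ℕ} (hgm : ∀ i, g i ∈ S.carrier)
    (lam : Fin ν → ℕ) : ∑ i, lam i * g i ∈ S.carrier := by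
  classical
  refine Finset.sum_induction _ (· ∈ S.carrier) (fun a b ha hb => S.add_mem a ha b hb)
    S.zero_mem (fun i _ => S.aux_nsmul_mem _ _ (hgm i))

lemma mult_spec (S : NumSgp) : S.mult ∈ S.carrier ∧ S.mult ≠ 0 := by
  have hne : {s | s ∈ S.carrier ∧ s ≠ 0}.Nonempty := by
    have hinf : S.carrier.Infinite := by
      have := S.cofinite.infinite_compl
      rwa [compl_compl] at this
    obtain ⟨s, hs, hs0⟩ := (hinf.diff (Set.finite_singleton 0)).nonempty
    exact ⟨s, hs, by simpa using hs0⟩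
  exact Nat.sInf_mem hne

lemma zero_mem_apery (S : NumSgp) : 0 ∈ S.Apery S.mult := by
  refine ⟨S.zero_mem, ?_⟩
  rintro ⟨t, ht, h⟩
  have := S.mult_spec.2
  omega

lemma apery_sub (S : NumSgp) {n x w u : ℕ} (hx : x ∈ S.Apery n) (hw : w ∈ S.carrier)
    (hu : u ∈ S.carrier) (h : x = w + u) : w ∈ S.Apery n := by
  refine ⟨hw, ?_⟩
  rintro ⟨t, ht, rfl⟩
  exact hx.2 ⟨t + u, S.add_mem t ht u hu, by omega⟩

lemma apery_bddAbove (S : NumSgp) : ∃ N, ∀ s ∈ S.Apery S.mult, s ≤ N := by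
  obtain ⟨N, hN⟩ := S.cofinite.bddAbove
  refine ⟨N + S.mult, fun s hs => ?_⟩
  by_contra h
  push_neg at h
  have hm := S.mult_spec
  have h1 : s - S.mult ∈ S.carrier := by
    by_contra hc
    have : s - S.mult ≤ N := hN hc
    omega
  exact hs.2 ⟨s - S.mult, h1, by omega⟩

lemma isMinGen_apply (S : NumSgp) {ν : ℕ} {g : Fin ν → ℕ} (hg : S.MinGens g) (i : Fin ν) :
    S.IsMinGen (g i) := by
  have : g i ∈ Set.range g := ⟨i, rfl⟩
  rwa [hg.2] at this

lemma mult_isMinGen (S : NumSgp) : S.IsMinGen S.mult := by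
  obtain ⟨hm, hm0⟩ := S.mult_spec
  refine ⟨hm, hm0, ?_⟩
  rintro ⟨a, ha, b, hb, ha0, hb0, habs⟩
  have h1 : S.mult ≤ a := Nat.sInf_le ⟨ha, ha0⟩
  have h2 : S.mult ≤ b := Nat.sInf_le ⟨hb, hb0⟩
  omega

lemma g_zero (S : NumSgp) {ν : ℕ} {g : Fin ν → ℕ} (hg : S.MinGens g) (hν : 0 < ν) :
    g ⟨0, hν⟩ = S.mult := by
  have hmem : S.mult ∈ Set.range g := by rw [hg.2]; exact S.mult_isMinGen
  obtain ⟨j, hj⟩ := hmem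
  have h1 : g ⟨0, hν⟩ ≤ g j := hg.1.monotone (by simp [Fin.le_def])
  have hmin := S.isMinGen_apply hg ⟨0, hν⟩
  have h2 : S.mult ≤ g ⟨0, hν⟩ := Nat.sInf_le ⟨hmin.1, hmin.2.1⟩
  omega

lemma exists_rep (S : NumSgp) {ν : ℕ} {g : Fin ν → ℕ} (hg : S.MinGens g) :
    ∀ s, s ∈ S.carrier → ∃ lam : Fin ν → ℕ, s = ∑ i, lam i * g i := by
  intro s
  induction s using Nat.strong_induction_on with
  | _ s ih =>
    intro hs
    by_cases h0 : s = 0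
    · exact ⟨0, by simp [h0]⟩
    by_cases hmin : S.IsMinGen s
    · have : s ∈ Set.range g := by rw [hg.2]; exact hmin
      obtain ⟨i, hi⟩ := this
      refine ⟨fun j => if j = i then 1 else 0, ?_⟩
      rw [Finset.sum_eq_single i]
      · simp [hi]
      · intro j _ hj; simp [hj]
      · simp
    · have hdec : ∃ a ∈ S.carrier, ∃ b ∈ S.carrier, a ≠ 0 ∧ b ≠ 0 ∧ s = a + b := by
        by_contra h; exact hmin ⟨hs, h0, h⟩
      obtain ⟨a, ha, b, hb, ha0, hb0, hab⟩ := hdec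
      obtain ⟨la, hla⟩ := ih a (by omega) ha
      obtain ⟨lb, hlb⟩ := ih b (by omega) hb
      refine ⟨la + lb, ?_⟩
      simp only [Pi.add_apply, add_mul, Finset.sum_add_distrib]
      omega

lemma sum_split {ν : ℕ} (g a b : Fin ν → ℕ) (h : ∀ i, a i ≤ b i) :
    ∑ i, b i * g i = ∑ i, a i * g i + ∑ i, (b i - a i) * g i := by
  rw [← Finset.sum_add_distrib]
  refine Finset.sum_congr rfl fun i _ => ?_
  rw [← add_mul, Nat.add_sub_cancel' (h i)]

lemma sum_eq_of_le {ν : ℕ} {g a b : Fin ν → ℕ} (hgpos : ∀ i, g i ≠ 0) (h : ∀ i, a i ≤ b i)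
    (heq : ∑ i, a i * g i = ∑ i, b i * g i) : a = b := by
  have hs := sum_split g a b h
  have hz : ∑ i, (b i - a i) * g i = 0 := by omega
  funext i
  have := (Finset.sum_eq_zero_iff.mp hz) i (Finset.mem_univ i)
  have hgi := hgpos i
  have := Nat.mul_eq_zero.mp this |>.elim id fun h => absurd h (hgpos i)
  have hi := h i
  omega

lemma alpha_spec (S : NumSgp) {ν : ℕ} {g : Fin ν → ℕ} (hg : S.MinGens g) (i : Fin ν) :
    (S.alpha g i) * g i ∈ S.Apery S.mult ∧
      ∀ h, h * g i ∈ S.Apery S.mult → h ≤ S.alpha g i := by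
  obtain ⟨N, hN⟩ := S.apery_bddAbove
  have hgpos : 0 < g i := Nat.pos_of_ne_zero (S.isMinGen_apply hg i).2.1
  have hbdd : BddAbove {h | h * g i ∈ S.Apery S.mult} := by
    refine ⟨N, fun h hh => ?_⟩
    have h1 := hN _ hh
    have h2 : h ≤ h * g i := Nat.le_mul_of_pos_right h hgpos
    omega
  have hne : ({h | h * g i ∈ S.Apery S.mult}).Nonempty := ⟨0, by simpa using S.zero_mem_apery⟩
  exact ⟨Nat.sSup_mem hne hbdd, fun h hh => le_csSup hbdd hh⟩

lemma apery_subcomb (S : NumSgp) {ν : ℕ} {g : Fin ν → ℕ} (hgm : ∀ i, g i ∈ S.carrier)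
    {a b : Fin ν → ℕ} (h : ∀ i, a i ≤ b i) (hx : ∑ i, b i * g i ∈ S.Apery S.mult) :
    ∑ i, a i * g i ∈ S.Apery S.mult :=
  S.apery_sub hx (S.aux_comb_mem hgm a) (S.aux_comb_mem hgm _) (sum_split g a b h)

lemma single_mem_apery (S : NumSgp) {ν : ℕ} {g : Fin ν → ℕ} (hgm : ∀ i, g i ∈ S.carrier)
    {μ : Fin ν → ℕ} (hx : ∑ i, μ i * g i ∈ S.Apery S.mult) (i : Fin ν) :
    μ i * g i ∈ S.Apery S.mult := by
  classical
  have h := S.apery_subcomb hgm (a := fun j => if j = i then μ i else 0) (b := μ)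
    (fun j => by by_cases hj : j = i <;> simp [hj]) hx
  rw [Finset.sum_eq_single i (fun j _ hj => by simp [hj]) (by simp)] at h
  simpa using h

lemma rep_zero_coeff (S : NumSgp) {ν : ℕ} {g : Fin ν → ℕ} (hg : S.MinGens g)
    (hgm : ∀ i, g i ∈ S.carrier) {x : ℕ} (hx : x ∈ S.Apery S.mult)
    {μ : Fin ν → ℕ} (hrep : x = ∑ i, μ i * g i) (i : Fin ν) (hi : (i : ℕ) = 0) : μ i = 0 := by
  classical
  by_contra h
  have hν : 0 < ν := i.pos
  have hgi : g i = S.mult := by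
    have := S.g_zero hg hν
    rwa [show (⟨0, hν⟩ : Fin ν) = i from (Fin.ext hi.symm)] at this
  set a : Fin ν → ℕ := fun j => if j = i then μ i - 1 else μ j with ha
  have hle : ∀ j, a j ≤ μ j := by
    intro j; by_cases hj : j = i
    · subst hj; simp [ha]
    · simp [ha, hj]
  have hsplit := sum_split g a μ hle
  have hrest : ∑ j, (μ j - a j) * g j = g i := by
    rw [Finset.sum_eq_single i]
    · simp only [ha, if_pos rfl]
      have : μ i - (μ i - 1) = 1 := by omega
      rw [this, one_mul]
    · intro j _ hj; simp [ha, hj]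
    · simp
  exact hx.2 ⟨∑ j, a j * g j, S.aux_comb_mem hgm a, by rw [hrep, hsplit, hrest, hgi]⟩

end NumSgp

end Aux

open NumSgp

/-- `Ap(S, m)` is α-rectangular iff the poset `(Ap(S, m), ⪯)` has a unique
maximal element and that element has a unique representation. -/
theorem stmt_5 (S : NumSgp) (ν : ℕ) (g : Fin ν → ℕ) (hg : S.MinGens g) :
    S.Apery S.mult = rect g (S.alpha g) ↔
      ∃ x, (x ∈ S.Apery S.mult ∧ ∀ y ∈ S.Apery S.mult, S.sle x y → y = x) ∧
        (∀ x', (x' ∈ S.Apery S.mult ∧ ∀ y ∈ S.Apery S.mult, S.sle x' y → y = x') → x' = x) ∧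
        UniqueRep g x := by
  classical
  have hgm : ∀ i, g i ∈ S.carrier := fun i => (S.isMinGen_apply hg i).1
  have hgpos : ∀ i, g i ≠ 0 := fun i => (S.isMinGen_apply hg i).2.1
  constructor
  · intro hEq
    set A : Fin ν → ℕ := fun i => if (i : ℕ) = 0 then 0 else S.alpha g i with hA
    set x : ℕ := ∑ i, A i * g i with hxdef
    have hAle : ∀ i, A i ≤ S.alpha g i := by
      intro i; by_cases h : (i : ℕ) = 0 <;> simp [hA, h]
    have hxrect : x ∈ rect g (S.alpha g) :=
      ⟨A, fun i hi => by simp [hA, hi], hAle, rfl⟩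
    have hxAp : x ∈ S.Apery S.mult := by rw [hEq]; exact hxrect
    have hmaximum : ∀ w ∈ S.Apery S.mult, S.sle w x := by
      intro w hw
      rw [hEq] at hw
      obtain ⟨lam, hlam0, hlamle, rfl⟩ := hw
      have hle : ∀ i, lam i ≤ A i := by
        intro i; by_cases h : (i : ℕ) = 0
        · simp [hA, h, hlam0 i h]
        · simpa [hA, h] using hlamle i
      exact ⟨∑ i, (A i - lam i) * g i, S.aux_comb_mem hgm _, sum_split g lam A hle⟩
    refine ⟨x, ⟨hxAp, ?_⟩, ?_, ?_⟩
    · intro y hy hxy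
      obtain ⟨u, hu, rfl⟩ := hxy
      obtain ⟨v, hv, hveq⟩ := hmaximum _ hy
      omega
    · rintro x' ⟨hx'Ap, hx'max⟩
      exact (hx'max x hxAp (hmaximum x' hx'Ap)).symm
    · refine ⟨A, rfl, ?_⟩
      intro μ hμ
      have hle : ∀ i, μ i ≤ A i := by
        intro i
        by_cases h : (i : ℕ) = 0
        · have := S.rep_zero_coeff hg hgm hxAp hμ i h
          simp [hA, h, this]
        · have hsingle := S.single_mem_apery hgm (μ := μ) (by rw [← hμ]; exact hxAp) i
          have := (S.alpha_spec hg i).2 _ hsingle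
          simpa [hA, h] using this
      exact sum_eq_of_le hgpos hle (hμ.symm.trans hxdef)
  · rintro ⟨x, ⟨hxAp, hxmax⟩, huniq, μ, hμrep, hμuniq⟩
    obtain ⟨N, hN⟩ := S.apery_bddAbove
    have hmaximum : ∀ w ∈ S.Apery S.mult, S.sle w x := by
      have key : ∀ k, ∀ w ∈ S.Apery S.mult, N - w = k → S.sle w x := by
        intro k
        induction k using Nat.strong_induction_on with
        | _ k ih =>
          intro w hw hk
          by_cases hwm : ∀ y ∈ S.Apery S.mult, S.sle w y → y = w
          · have := huniq w ⟨hw, hwm⟩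
            subst this
            exact ⟨0, S.zero_mem, by omega⟩
          · push_neg at hwm
            obtain ⟨y, hy, ⟨u, hu, rfl⟩, hyne⟩ := hwm
            have hu0 : u ≠ 0 := by rintro rfl; exact hyne (by omega)
            have hyN : w + u ≤ N := hN _ hy
            obtain ⟨v, hv, hveq⟩ := ih (N - (w + u)) (by omega) _ hy rfl
            exact ⟨u + v, S.add_mem u hu v hv, by omega⟩
      intro w hw; exact key (N - w) w hw rfl
    have hμ0 : ∀ i : Fin ν, (i : ℕ) = 0 → μ i = 0 :=
      fun i hi => S.rep_zero_coeff hg hgm hxAp hμrep i hi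
    have hμα : ∀ i, μ i = S.alpha g i := by
      intro i
      have h1 : μ i ≤ S.alpha g i := by
        have hsingle := S.single_mem_apery hgm (μ := μ) (by rw [← hμrep]; exact hxAp) i
        exact (S.alpha_spec hg i).2 _ hsingle
      have h2 : S.alpha g i ≤ μ i := by
        obtain ⟨u, hu, hueq⟩ := hmaximum _ (S.alpha_spec hg i).1
        obtain ⟨κ, rfl⟩ := S.exists_rep hg u hu
        set e : Fin ν → ℕ := fun j => if j = i then S.alpha g i else 0 with he
        have hrep2 : x = ∑ j, (κ j + e j) * g j := by
          simp only [add_mul, Finset.sum_add_distrib]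
          have hsum : ∑ j, e j * g j = S.alpha g i * g i := by
            rw [Finset.sum_eq_single i (fun j _ hj => by simp [he, hj]) (by simp)]
            simp [he]
          rw [hsum]
          omega
        have hfe := congrFun (hμuniq _ hrep2) i
        simp [he] at hfe
        omega
      omega
    ext w
    constructor
    · intro hw
      obtain ⟨u, hu, hueq⟩ := hmaximum w hw
      obtain ⟨lam, rfl⟩ := S.exists_rep hg w hw.1
      obtain ⟨κ, rfl⟩ := S.exists_rep hg u hu
      have hrep2 : x = ∑ j, (lam j + κ j) * g j := by
        simp only [add_mul, Finset.sum_add_distrib]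
        omega
      have hlk := hμuniq _ hrep2
      refine ⟨lam, ?_, ?_, rfl⟩
      · intro i hi
        have h1 := congrFun hlk i
        have h0 := hμ0 i hi
        replace h1 : lam i + κ i = μ i := h1
        omega
      · intro i
        have h1 := congrFun hlk i
        have h2 := hμα i
        replace h1 : lam i + κ i = μ i := h1
        omega
    · rintro ⟨lam, hlam0, hlamle, rfl⟩
      have hle : ∀ i, lam i ≤ μ i := fun i => (hμα i) ▸ hlamle i
      exact S.apery_subcomb hgm hle (by rw [← hμrep]; exact hxAp)
end

section
/- A numerical semigroup S has α-rectangular Apéry set if and only if S is symmetric and every element of Ap(S,m) has a unique representation as a nonnegative integer combination of the minimal generators. -/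
open NumSgp
section Aux
variable (S : NumSgp)

lemma aux_exists_bound : ∃ N : ℕ, ∀ n, N ≤ n → n ∈ S.carrier := by
  obtain ⟨b, hb⟩ := S.cofinite.bddAbove
  refine ⟨b + 1, fun n hn => ?_⟩
  by_contra h
  exact absurd (hb (show n ∈ S.carrierᶜ from h)) (by omega)

lemma aux_mult_mem : S.mult ∈ S.carrier ∧ S.mult ≠ 0 := by
  have h : {s | s ∈ S.carrier ∧ s ≠ 0}.Nonempty := by
    obtain ⟨N, hN⟩ := aux_exists_bound S
    exact ⟨max N 1, hN _ (le_max_left _ _), by positivity⟩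
  exact Nat.sInf_mem h

lemma aux_mult_pos : 0 < S.mult := Nat.pos_of_ne_zero (aux_mult_mem S).2

lemma aux_mult_le {s : ℕ} (hs : s ∈ S.carrier) (hs0 : s ≠ 0) : S.mult ≤ s :=
  Nat.sInf_le ⟨hs, hs0⟩

lemma aux_mul_mem {a : ℕ} (ha : a ∈ S.carrier) (k : ℕ) : k * a ∈ S.carrier := by
  induction k with
  | zero => simpa using S.zero_mem
  | succ k ih => rw [Nat.succ_mul]; exact S.add_mem _ ih _ ha

lemma aux_add_mul_mem {w a : ℕ} (hw : w ∈ S.carrier) (ha : a ∈ S.carrier) (k : ℕ) :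
    w + k * a ∈ S.carrier := S.add_mem _ hw _ (aux_mul_mem S ha k)

lemma aux_zero_apery : 0 ∈ S.Apery S.mult := by
  refine ⟨S.zero_mem, ?_⟩
  rintro ⟨t, ht, h⟩
  have := aux_mult_pos S
  omega

lemma aux_apery_nonempty : (S.Apery S.mult).Nonempty := ⟨0, aux_zero_apery S⟩

lemma aux_apery_bddAbove : BddAbove (S.Apery S.mult) := by
  obtain ⟨N, hN⟩ := aux_exists_bound S
  refine ⟨N + S.mult, fun x hx => ?_⟩
  by_contra h
  push_neg at h
  exact hx.2 ⟨x - S.mult, hN _ (by omega), by omega⟩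

lemma aux_not_apery {x : ℕ} (hx : x ∈ S.carrier) (h : x ∉ S.Apery S.mult) :
    ∃ t ∈ S.carrier, x = t + S.mult := by
  by_contra hc
  exact h ⟨hx, hc⟩

lemma aux_exists_apery_rep : ∀ x ∈ S.carrier, ∃ w ∈ S.Apery S.mult, ∃ k, x = w + k * S.mult := by
  intro x
  induction x using Nat.strong_induction_on with
  | _ x ih =>
    intro hx
    by_cases h : x ∈ S.Apery S.mult
    · exact ⟨x, h, 0, by omega⟩
    · obtain ⟨t, ht, rfl⟩ := aux_not_apery S hx h
      have hm := aux_mult_pos S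
      obtain ⟨w, hw, k, rfl⟩ := ih t (by omega) ht
      exact ⟨w, hw, k + 1, by ring⟩

lemma aux_exists_apery_mod (n : ℕ) : ∃ w ∈ S.Apery S.mult, n % S.mult = w % S.mult := by
  obtain ⟨N, hN⟩ := aux_exists_bound S
  have hm := aux_mult_pos S
  have hx : n + N * S.mult ∈ S.carrier := hN _ (by nlinarith)
  obtain ⟨w, hw, k, hk⟩ := aux_exists_apery_rep S _ hx
  refine ⟨w, hw, ?_⟩
  have : n % S.mult = (n + N * S.mult) % S.mult := by rw [Nat.add_mul_mod_self_right]
  rw [this, hk, Nat.add_mul_mod_self_right]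

lemma aux_mod_rep {a b : ℕ} (hm : 0 < S.mult) (h : a % S.mult = b % S.mult) (hab : a ≤ b) :
    ∃ k, b = a + k * S.mult := by
  have : S.mult ∣ b - a := (Nat.modEq_iff_dvd' hab).mp h
  obtain ⟨k, hk⟩ := this
  exact ⟨k, by rw [Nat.mul_comm]; omega⟩

end Aux
section Frob
variable (S : NumSgp)

lemma aux_sSup_apery_mem : sSup (S.Apery S.mult) ∈ S.Apery S.mult :=
  Nat.sSup_mem (aux_apery_nonempty S) (aux_apery_bddAbove S)

lemma aux_le_sSup_apery {w : ℕ} (hw : w ∈ S.Apery S.mult) : w ≤ sSup (S.Apery S.mult) :=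
  le_csSup (aux_apery_bddAbove S) hw

lemma aux_sSup_ge : S.mult ≤ sSup (S.Apery S.mult) + 1 := by
  have hm := aux_mult_pos S
  obtain ⟨w, hw, hmod⟩ := aux_exists_apery_mod S (S.mult - 1)
  have h1 : (S.mult - 1) % S.mult = S.mult - 1 := Nat.mod_eq_of_lt (by omega)
  have h2 : w % S.mult ≤ w := Nat.mod_le _ _
  have := aux_le_sSup_apery S hw
  omega

lemma aux_isFrob : S.IsFrob (((sSup (S.Apery S.mult) : ℕ) : ℤ) - S.mult) := by
  set M := sSup (S.Apery S.mult) with hM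
  have hm := aux_mult_pos S
  have hMm := aux_sSup_ge S
  constructor
  · rintro ⟨t, ht, hteq⟩
    have h : M = t + S.mult := by exact_mod_cast (by omega : (M : ℤ) = t + S.mult)
    exact (aux_sSup_apery_mem S).2 ⟨t, ht, h⟩
  · intro x hx
    have hx0 : 0 ≤ x := by omega
    obtain ⟨n, rfl⟩ := Int.eq_ofNat_of_zero_le hx0
    obtain ⟨w, hw, hmod⟩ := aux_exists_apery_mod S n
    have hwM := aux_le_sSup_apery S hw
    rcases le_or_gt w n with hle | hlt
    · obtain ⟨k, rfl⟩ := aux_mod_rep S hm hmod.symm hle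
      exact ⟨_, aux_add_mul_mem S hw.1 (aux_mult_mem S).1 k, rfl⟩
    · obtain ⟨k, hk⟩ := aux_mod_rep S hm hmod (le_of_lt hlt)
      have hk1 : k ≠ 0 := by rintro rfl; simp at hk; omega
      have h2 : n + S.mult ≤ w := by nlinarith [Nat.one_le_iff_ne_zero.mpr hk1]
      have : (n : ℤ) ≤ (M : ℤ) - S.mult := by push_cast; omega
      omega

lemma aux_frob_unique {f1 f2 : ℤ} (h1 : S.IsFrob f1) (h2 : S.IsFrob f2) : f1 = f2 := by
  rcases lt_trichotomy f1 f2 with h | h | h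
  · exact absurd (h1.2 _ h) h2.1
  · exact h
  · exact absurd (h2.2 _ h) h1.1

lemma aux_symm_of_apery
    (hsym : ∀ w ∈ S.Apery S.mult, sSup (S.Apery S.mult) - w ∈ S.Apery S.mult) : S.Symm := by
  set M := sSup (S.Apery S.mult) with hMdef
  have hm := aux_mult_pos S
  have hMm := aux_sSup_ge S
  refine ⟨(M : ℤ) - S.mult, aux_isFrob S, fun x => ?_⟩
  constructor
  · rintro ⟨a, ha, haeq⟩ ⟨b, hb, hbeq⟩
    have hab : a + b ∈ S.carrier := S.add_mem _ ha _ hb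
    have : M = (a + b) + S.mult := by exact_mod_cast (by omega : (M : ℤ) = (a + b) + S.mult)
    exact (aux_sSup_apery_mem S).2 ⟨a + b, hab, this⟩
  · intro hnx
    by_contra hx
    have hfrob := aux_isFrob S
    have hx0 : 0 ≤ x := by
      by_contra h
      push_neg at h
      exact hnx (hfrob.2 _ (by omega))
    have hxf : x ≤ (M : ℤ) - S.mult := by
      by_contra h
      push_neg at h
      exact hx (hfrob.2 _ h)
    obtain ⟨n, rfl⟩ := Int.eq_ofNat_of_zero_le hx0
    have hnS : n ∉ S.carrier := fun h => hx ⟨n, h, rfl⟩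
    obtain ⟨w, hw, hmod⟩ := aux_exists_apery_mod S n
    have hwM := aux_le_sSup_apery S hw
    have hlt : n < w := by
      rcases le_or_gt w n with hle | hlt
      · obtain ⟨k, rfl⟩ := aux_mod_rep S hm hmod.symm hle
        exact absurd (aux_add_mul_mem S hw.1 (aux_mult_mem S).1 k) hnS
      · exact hlt
    obtain ⟨k, hk⟩ := aux_mod_rep S hm hmod (le_of_lt hlt)
    have hk0 : k ≠ 0 := by rintro rfl; simp at hk; omega
    have hk1 : 1 ≤ k := Nat.one_le_iff_ne_zero.mpr hk0
    refine hnx ⟨(M - w) + (k - 1) * S.mult,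
      aux_add_mul_mem S (hsym w hw).1 (aux_mult_mem S).1 _, ?_⟩
    have hcast : ((M - w : ℕ) : ℤ) = (M : ℤ) - w := by exact Nat.cast_sub hwM
    have hwZ : (w : ℤ) = n + k * S.mult := by exact_mod_cast hk
    push_cast [hcast, Nat.cast_sub hk1]
    linear_combination -hwZ

lemma aux_apery_of_symm (hs : S.Symm) :
    ∀ w ∈ S.Apery S.mult, sSup (S.Apery S.mult) - w ∈ S.Apery S.mult := by
  set M := sSup (S.Apery S.mult) with hMdef
  have hm := aux_mult_pos S
  obtain ⟨f, hf, hsym⟩ := hs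
  have hfM : f = (M : ℤ) - S.mult := aux_frob_unique S hf (aux_isFrob S)
  subst hfM
  intro w hw
  rcases Nat.eq_zero_or_pos w with rfl | hw0
  · simpa using aux_sSup_apery_mem S
  have hwm : S.mult ≤ w := aux_mult_le S hw.1 (by omega)
  have hwM : w ≤ M := aux_le_sSup_apery S hw
  have h1 : ¬ S.memZ ((w : ℤ) - S.mult) := by
    rintro ⟨t, ht, hteq⟩
    exact hw.2 ⟨t, ht, by exact_mod_cast (by omega : (w : ℤ) = t + S.mult)⟩
  have h2 : S.memZ ((M : ℤ) - S.mult - ((w : ℤ) - S.mult)) := by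
    by_contra h
    exact h1 ((hsym _).mpr h)
  obtain ⟨u, hu, hueq⟩ := h2
  have hu' : u = M - w := by omega
  subst hu'
  refine ⟨hu, ?_⟩
  rintro ⟨t, ht, hteq⟩
  have : S.memZ ((M : ℤ) - S.mult - w) := ⟨t, ht, by push_cast; omega⟩
  exact ((hsym (w : ℤ)).mp ⟨w, hw.1, rfl⟩) this

end Frob
section Gens
variable (S : NumSgp) {ν : ℕ} (g : Fin ν → ℕ)

lemma aux_sum_split (lam : Fin ν → ℕ) (i : Fin ν) :
    ∑ j, lam j * g j = lam i * g i + ∑ j ∈ Finset.univ.erase i, lam j * g j :=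
  (Finset.add_sum_erase _ _ (Finset.mem_univ i)).symm

lemma aux_sum_update (lam : Fin ν → ℕ) (i : Fin ν) (c : ℕ) :
    ∑ j, (Function.update lam i c) j * g j
      = c * g i + ∑ j ∈ Finset.univ.erase i, lam j * g j := by
  rw [aux_sum_split g _ i, Function.update_self]
  congr 1
  exact Finset.sum_congr rfl fun j hj => by
    rw [Function.update_of_ne (Finset.ne_of_mem_erase hj)]

lemma aux_gen_mem (hg : S.MinGens g) (i : Fin ν) : g i ∈ S.carrier ∧ g i ≠ 0 := by
  have : g i ∈ {s | S.IsMinGen s} := hg.2 ▸ Set.mem_range_self i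
  exact ⟨this.1, this.2.1⟩

lemma aux_sum_mem (hg : S.MinGens g) (lam : Fin ν → ℕ) :
    ∑ j, lam j * g j ∈ S.carrier := by
  classical
  induction (Finset.univ : Finset (Fin ν)) using Finset.induction_on with
  | empty => simpa using S.zero_mem
  | insert a s h ih =>
    rw [Finset.sum_insert h]
    exact S.add_mem _ (aux_mul_mem S (aux_gen_mem S g hg _).1 _) _ ih

lemma aux_mingen_mult : S.IsMinGen S.mult := by
  refine ⟨(aux_mult_mem S).1, (aux_mult_mem S).2, ?_⟩
  rintro ⟨a, ha, b, hb, ha0, hb0, heq⟩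
  have h1 := aux_mult_le S ha ha0
  have h2 := aux_mult_le S hb hb0
  omega

lemma aux_g_zero (hg : S.MinGens g) {i : Fin ν} (hi : i.val = 0) : g i = S.mult := by
  have hmem : S.mult ∈ Set.range g := hg.2 ▸ aux_mingen_mult S
  obtain ⟨j, hj⟩ := hmem
  have h1 : g i ≤ g j := hg.1.monotone (by omega)
  have h2 : S.mult ≤ g i := aux_mult_le S (aux_gen_mem S g hg i).1 (aux_gen_mem S g hg i).2
  omega

lemma aux_exists_rep (hg : S.MinGens g) :
    ∀ x ∈ S.carrier, ∃ lam : Fin ν → ℕ, x = ∑ i, lam i * g i := by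
  intro x
  induction x using Nat.strong_induction_on with
  | _ x ih =>
    intro hx
    rcases Nat.eq_zero_or_pos x with rfl | hx0
    · exact ⟨0, by simp⟩
    by_cases hmin : S.IsMinGen x
    · have : x ∈ Set.range g := hg.2 ▸ hmin
      obtain ⟨j, hj⟩ := this
      refine ⟨Function.update 0 j 1, ?_⟩
      rw [aux_sum_update g 0 j 1]
      simp [hj]
    · have hex : ∃ a ∈ S.carrier, ∃ b ∈ S.carrier, a ≠ 0 ∧ b ≠ 0 ∧ x = a + b := by
        by_contra hc
        exact hmin ⟨hx, by omega, hc⟩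
      obtain ⟨a, ha, b, hb, ha0, hb0, rfl⟩ := hex
      obtain ⟨la, hla⟩ := ih a (by omega) ha
      obtain ⟨lb, hlb⟩ := ih b (by omega) hb
      refine ⟨la + lb, ?_⟩
      simp only [Pi.add_apply, add_mul, Finset.sum_add_distrib]
      omega

lemma aux_alpha_spec (hg : S.MinGens g) (i : Fin ν) :
    (S.alpha g i) * g i ∈ S.Apery S.mult ∧
      ∀ h, h * g i ∈ S.Apery S.mult → h ≤ S.alpha g i := by
  have hbdd : BddAbove {h | h * g i ∈ S.Apery S.mult} := by
    refine ⟨sSup (S.Apery S.mult), fun h hh => ?_⟩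
    have h1 : h ≤ h * g i := Nat.le_mul_of_pos_right _
      (Nat.pos_of_ne_zero (aux_gen_mem S g hg i).2)
    exact h1.trans (aux_le_sSup_apery S hh)
  have hne : {h | h * g i ∈ S.Apery S.mult}.Nonempty :=
    ⟨0, by simpa using aux_zero_apery S⟩
  exact ⟨Nat.sSup_mem hne hbdd, fun h hh => le_csSup hbdd hh⟩

lemma aux_alpha_zero (hg : S.MinGens g) {i : Fin ν} (hi : i.val = 0) :
    S.alpha g i = 0 := by
  by_contra h
  have hmem := (aux_alpha_spec S g hg i).1
  rw [aux_g_zero S g hg hi] at hmem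
  exact hmem.2 ⟨(S.alpha g i - 1) * S.mult, aux_mul_mem S (aux_mult_mem S).1 _, by
    obtain ⟨k, hk⟩ := Nat.exists_eq_succ_of_ne_zero h
    rw [hk, Nat.succ_sub_one, Nat.succ_mul]⟩

lemma aux_boxed (hg : S.MinGens g) {x : ℕ} (hx : x ∈ S.Apery S.mult)
    {lam : Fin ν → ℕ} (hrep : x = ∑ j, lam j * g j) :
    ∀ i, lam i ≤ S.alpha g i := by
  intro i
  refine (aux_alpha_spec S g hg i).2 _ ?_
  refine ⟨aux_mul_mem S (aux_gen_mem S g hg i).1 _, ?_⟩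
  rintro ⟨t, ht, hteq⟩
  refine hx.2 ⟨t + ∑ j ∈ Finset.univ.erase i, lam j * g j, ?_, ?_⟩
  · refine S.add_mem _ ht _ ?_
    have := aux_sum_mem S g hg (Function.update lam i 0)
    rwa [aux_sum_update g lam i 0, zero_mul, zero_add] at this
  · rw [hrep, aux_sum_split g lam i, hteq]; ring

lemma aux_boxed_zero (hg : S.MinGens g) {x : ℕ} (hx : x ∈ S.Apery S.mult)
    {lam : Fin ν → ℕ} (hrep : x = ∑ j, lam j * g j) :
    ∀ i : Fin ν, i.val = 0 → lam i = 0 := by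
  intro i hi
  have := aux_boxed S g hg hx hrep i
  rw [aux_alpha_zero S g hg hi] at this
  omega

lemma aux_apery_subset_rect (hg : S.MinGens g) :
    S.Apery S.mult ⊆ rect g (S.alpha g) := by
  intro x hx
  obtain ⟨lam, hlam⟩ := aux_exists_rep S g hg x hx.1
  exact ⟨lam, aux_boxed_zero S g hg hx hlam, aux_boxed S g hg hx hlam, hlam⟩

end Gens
lemma aux_sum_sub {ν : ℕ} (g lam mu : Fin ν → ℕ) (h : ∀ i, lam i ≤ mu i) :
    ∑ j, lam j * g j + ∑ j, (mu j - lam j) * g j = ∑ j, mu j * g j := by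
  rw [← Finset.sum_add_distrib]
  exact Finset.sum_congr rfl fun j _ => by
    have := h j
    rw [← add_mul]
    congr 1
    omega

/-- `Ap(S, m)` is α-rectangular iff `S` is symmetric and every element of
`Ap(S, m)` has a unique representation. -/
theorem stmt_6 (S : NumSgp) (ν : ℕ) (g : Fin ν → ℕ) (hg : S.MinGens g) :
    S.Apery S.mult = rect g (S.alpha g) ↔
      (S.Symm ∧ ∀ x ∈ S.Apery S.mult, UniqueRep g x) := by
  constructor
  · intro hr
    have hArect : (∑ i, S.alpha g i * g i) ∈ rect g (S.alpha g) :=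
      ⟨S.alpha g, fun i hi => aux_alpha_zero S g hg hi, fun i => le_rfl, rfl⟩
    have hAap : (∑ i, S.alpha g i * g i) ∈ S.Apery S.mult := by rw [hr]; exact hArect
    have hsup : sSup (S.Apery S.mult) = ∑ i, S.alpha g i * g i := by
      refine le_antisymm (csSup_le (aux_apery_nonempty S) fun w hw => ?_)
        (aux_le_sSup_apery S hAap)
      rw [hr] at hw
      obtain ⟨lam, h0, hle, rfl⟩ := hw
      exact Finset.sum_le_sum fun j _ => Nat.mul_le_mul (hle j) (le_refl (g j))
    constructor
    · refine aux_symm_of_apery S ?_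
      intro w hw
      rw [hsup]
      rw [hr] at hw
      obtain ⟨lam, h0, hle, rfl⟩ := hw
      have hsum := aux_sum_sub g lam (S.alpha g) hle
      have heq : (∑ i, S.alpha g i * g i) - ∑ j, lam j * g j
          = ∑ j, (S.alpha g j - lam j) * g j := by omega
      rw [heq, hr]
      exact ⟨fun j => S.alpha g j - lam j,
        fun i hi => by show S.alpha g i - lam i = 0; rw [aux_alpha_zero S g hg hi]; omega,
        fun i => by show S.alpha g i - lam i ≤ S.alpha g i; omega, rfl⟩
    · intro x hx
      obtain ⟨lam, hlam⟩ := aux_exists_rep S g hg x hx.1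
      have key : ∀ a b : Fin ν → ℕ, x = ∑ j, a j * g j → x = ∑ j, b j * g j →
          ∀ i, a i ≤ b i := by
        intro a b hax hbx i
        by_contra hcon
        push_neg at hcon
        have hbox_a := aux_boxed S g hg hx hax
        have hbox_b := aux_boxed S g hg hx hbx
        have hi0 : i.val ≠ 0 := by
          intro h0
          have := hbox_a i
          rw [aux_alpha_zero S g hg h0] at this
          omega
        have hyrect : (∑ j, (Function.update b i (S.alpha g i)) j * g j)
            ∈ rect g (S.alpha g) := by
          refine ⟨Function.update b i (S.alpha g i), fun j hj => ?_, fun j => ?_, rfl⟩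
          · rw [Function.update_of_ne (fun hji : j = i => hi0 (hji ▸ hj))]
            exact aux_boxed_zero S g hg hx hbx j hj
          · rcases eq_or_ne j i with rfl | hne
            · rw [Function.update_self]
            · rw [Function.update_of_ne hne]; exact hbox_b j
        have hyap : (∑ j, (Function.update b i (S.alpha g i)) j * g j)
            ∈ S.Apery S.mult := by rw [hr]; exact hyrect
        have hrepy : (∑ j, (Function.update b i (S.alpha g i)) j * g j)
            = ∑ j, (Function.update a i (a i + (S.alpha g i - b i))) j * g j := by
          rw [aux_sum_update g b i _, aux_sum_update g a i _]
          have h1 := aux_sum_split g a i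
          have h2 := aux_sum_split g b i
          rw [← hax] at h1
          rw [← hbx] at h2
          have hb : b i ≤ S.alpha g i := hbox_b i
          rw [add_mul]
          have h3 : (S.alpha g i - b i) * g i + b i * g i = S.alpha g i * g i := by
            rw [← add_mul]; congr 1; omega
          omega
        have hfin := aux_boxed S g hg hyap hrepy i
        simp only [Function.update_self] at hfin
        have hb := hbox_b i
        omega
      exact ⟨lam, hlam, fun mu hmu => funext fun i =>
        le_antisymm (key mu lam hmu hlam i) (key lam mu hlam hmu i)⟩
  · rintro ⟨hs, hu⟩
    refine Set.Subset.antisymm (aux_apery_subset_rect S g hg) ?_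
    intro x hx
    obtain ⟨lam, h0, hle, rfl⟩ := hx
    have hMap := aux_sSup_apery_mem S
    have hsymAp := aux_apery_of_symm S hs
    obtain ⟨mu, hmu⟩ := aux_exists_rep S g hg (sSup (S.Apery S.mult)) hMap.1
    have hMA : ∀ i, mu i = S.alpha g i := by
      intro i
      have hag : S.alpha g i * g i ∈ S.Apery S.mult := (aux_alpha_spec S g hg i).1
      have hagM : S.alpha g i * g i ≤ sSup (S.Apery S.mult) := aux_le_sSup_apery S hag
      have hw : sSup (S.Apery S.mult) - S.alpha g i * g i ∈ S.Apery S.mult := hsymAp _ hag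
      obtain ⟨rho, hrho⟩ := aux_exists_rep S g hg _ hw.1
      have hrepM : sSup (S.Apery S.mult)
          = ∑ j, (Function.update rho i (rho i + S.alpha g i)) j * g j := by
        rw [aux_sum_update g rho i _]
        have h2 := aux_sum_split g rho i
        rw [← hrho] at h2
        rw [add_mul]
        omega
      obtain ⟨l0, hl0, hunique⟩ := hu _ hMap
      have e1 := hunique mu hmu
      have e2 := hunique _ hrepM
      have e3 : mu i = rho i + S.alpha g i := by rw [e1, ← e2, Function.update_self]
      have hbox := aux_boxed S g hg hMap hrepM i
      simp only [Function.update_self] at hbox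
      omega
    have hMA' : sSup (S.Apery S.mult) = ∑ j, S.alpha g j * g j := by
      rw [hmu]
      exact Finset.sum_congr rfl fun j _ => by rw [hMA j]
    refine ⟨aux_sum_mem S g hg lam, ?_⟩
    rintro ⟨t, ht, hteq⟩
    obtain ⟨f, hf, hsym⟩ := hs
    have hfM : f = ((sSup (S.Apery S.mult) : ℕ) : ℤ) - S.mult :=
      aux_frob_unique S hf (aux_isFrob S)
    have hsum := aux_sum_sub g lam (S.alpha g) hle
    have hyS : ∑ j, (S.alpha g j - lam j) * g j ∈ S.carrier := aux_sum_mem S g hg _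
    have hxyM : (∑ j, lam j * g j) + (∑ j, (S.alpha g j - lam j) * g j)
        = sSup (S.Apery S.mult) := by rw [hsum, ← hMA']
    have h1 : S.memZ (((sSup (S.Apery S.mult) : ℕ) : ℤ) - ∑ j, lam j * g j) := by
      refine ⟨_, hyS, ?_⟩
      have : ((∑ j, lam j * g j : ℕ) : ℤ) + ((∑ j, (S.alpha g j - lam j) * g j : ℕ) : ℤ)
          = ((sSup (S.Apery S.mult) : ℕ) : ℤ) := by exact_mod_cast hxyM
      push_cast
      push_cast at this
      omega
    have h2 := (hsym _).mp h1
    apply h2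
    refine ⟨t, ht, ?_⟩
    have hteqZ : ((∑ j, lam j * g j : ℕ) : ℤ) = (t : ℤ) + S.mult := by exact_mod_cast hteq
    rw [hfM]
    push_cast
    push_cast at hteqZ
    omega
end
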